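/- With the above construction and N = 2M, the derivative of ṽ at the left endpoint satisfies the closed form ṽ'(0) = v_0·( (π/(bM)) Σ_{i=1}^{M-1} (-1)^{i+1} i·cot(iπ/N) - (π/b) Σ_{j=1}^{M-1} (-1)^{j+1} cot(jπ/N) - 1/b ) + v_M·( 1/b - (π/(bM)) Σ_{i=1}^{M-1} (-1)^{i+1} i·cot(iπ/N) ) + (π/b) Σ_{i=1}^{M-1} (-1)^{i+1} v_i·cot(iπ/N). -/

import Mathlib

open Real Finset

lemma sum_j_sin (θ : ℝ) (n : ℕ) :
    (∑ j ∈ Finset.range (n+1), (j:ℝ) * Real.sin (j*θ)) * (4 * Real.sin (θ/2)^2)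
      = ((n:ℝ)+1) * Real.sin (n*θ) - (n:ℝ) * Real.sin (((n:ℝ)+1)*θ) := by
  induction n with
  | zero => simp
  | succ n ih =>
    rw [Finset.sum_range_succ, add_mul, ih]
    have hc : Real.cos θ = 1 - 2 * Real.sin (θ/2)^2 := by
      have := Real.cos_two_mul (θ/2); rw [show 2*(θ/2) = θ by ring] at this
      have h2 := Real.sin_sq_add_cos_sq (θ/2)
      nlinarith
    have h1 : Real.sin (((n:ℝ)+1+1)*θ) = Real.sin (((n:ℝ)+1)*θ) * Real.cos θ
        + Real.cos (((n:ℝ)+1)*θ) * Real.sin θ := by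
      rw [show ((n:ℝ)+1+1)*θ = ((n:ℝ)+1)*θ + θ by ring, Real.sin_add]
    have h2 : Real.sin ((n:ℝ)*θ) = Real.sin (((n:ℝ)+1)*θ) * Real.cos θ
        - Real.cos (((n:ℝ)+1)*θ) * Real.sin θ := by
      rw [show (n:ℝ)*θ = ((n:ℝ)+1)*θ - θ by ring, Real.sin_sub]
    push_cast
    rw [h1, h2, hc]
    ring

lemma key_cot (M k : ℕ) (hk1 : 1 ≤ k) (hkM : k < M) :
    ∑ j ∈ Finset.Ico 1 M, (j:ℝ) * Real.sin ((j:ℝ) * ((k:ℝ) * Real.pi / (M:ℝ)))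
      = ((M:ℝ)/2) * (-1:ℝ)^(k+1) * Real.cot ((k:ℝ) * Real.pi / (2*(M:ℝ))) := by
  have hM0 : 0 < M := lt_of_le_of_lt (Nat.zero_le k) hkM
  set θ : ℝ := (k:ℝ) * Real.pi / (M:ℝ) with hθ
  have hMR : (0:ℝ) < (M:ℝ) := by exact_mod_cast hM0
  have hθ2 : θ/2 = (k:ℝ) * Real.pi / (2*(M:ℝ)) := by rw [hθ]; ring
  have hspos : 0 < Real.sin (θ/2) := by
    apply Real.sin_pos_of_pos_of_lt_pi
    · rw [hθ2]
      have : (0:ℝ) < (k:ℝ) := by exact_mod_cast hk1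
      positivity
    · rw [hθ2]
      rw [div_lt_iff₀ (by positivity)]
      have hkM' : (k:ℝ) < (M:ℝ) := by exact_mod_cast hkM
      nlinarith [Real.pi_pos]
  have hs : Real.sin (θ/2) ≠ 0 := ne_of_gt hspos
  -- sum over Ico 1 M equals sum over range M
  have hrange : ∑ j ∈ Finset.Ico 1 M, (j:ℝ) * Real.sin ((j:ℝ) * θ)
      = ∑ j ∈ Finset.range M, (j:ℝ) * Real.sin ((j:ℝ) * θ) := by
    rw [Finset.range_eq_Ico, Finset.sum_eq_sum_Ico_succ_bot hM0]
    simp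
  have hkey := sum_j_sin θ (M-1)
  have hM1 : ((M:ℕ) - 1 : ℕ) + 1 = M := Nat.succ_pred_eq_of_pos hM0
  rw [hM1] at hkey
  have hMcast : ((M - 1 : ℕ) : ℝ) = (M:ℝ) - 1 := by
    have : (1:ℕ) ≤ M := hM0
    push_cast [this]
    ring
  rw [hMcast] at hkey
  have hMθ : ((M:ℝ) - 1 + 1) * θ = (k:ℝ) * Real.pi := by
    rw [hθ]; field_simp; ring
  have hMm1θ : ((M:ℝ) - 1) * θ = (k:ℝ) * Real.pi - θ := by
    rw [hθ]; field_simp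
  rw [hMθ, hMm1θ, Real.sin_nat_mul_pi, Real.sin_nat_mul_pi_sub] at hkey
  have hsin2 := Real.sin_two_mul (θ/2)
  rw [show 2*(θ/2) = θ by ring] at hsin2
  rw [hsin2] at hkey
  rw [hrange, Real.cot_eq_cos_div_sin, ← hθ2]
  apply mul_right_cancel₀ (b := 4 * Real.sin (θ/2)^2) (by positivity)
  rw [hkey]
  field_simp
  ring

lemma deriv_lin_sin (M : ℕ) (b : ℝ) (hb : 0 < b) (A D E : ℝ) (c : ℕ → ℝ) :
    deriv (fun x : ℝ => A + D * x
        - E * ∑ j ∈ Finset.Ico 1 M, c j * Real.sin ((j:ℝ) * Real.pi * x / b)) 0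
      = D - E * ∑ j ∈ Finset.Ico 1 M, c j * ((j:ℝ) * Real.pi / b) := by
  have h : HasDerivAt (fun x : ℝ => A + D * x
      - E * ∑ j ∈ Finset.Ico 1 M, c j * Real.sin ((j:ℝ) * Real.pi * x / b))
      (D - E * ∑ j ∈ Finset.Ico 1 M, c j * ((j:ℝ) * Real.pi / b)) 0 := by
    have hsum : HasDerivAt (fun x : ℝ => ∑ j ∈ Finset.Ico 1 M,
        c j * Real.sin ((j:ℝ) * Real.pi * x / b))
        (∑ j ∈ Finset.Ico 1 M, c j * ((j:ℝ) * Real.pi / b)) 0 := by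
      apply HasDerivAt.fun_sum
      intro j hj
      have hinner : HasDerivAt (fun x : ℝ => (j:ℝ) * Real.pi * x / b)
          ((j:ℝ) * Real.pi / b) 0 := by
        simpa using ((hasDerivAt_id (0:ℝ)).const_mul ((j:ℝ) * Real.pi)).div_const b
      have hsin := (Real.hasDerivAt_sin ((j:ℝ) * Real.pi * 0 / b)).comp 0 hinner
      have h0 : (j:ℝ) * Real.pi * 0 / b = 0 := by ring
      rw [h0, Real.cos_zero, one_mul] at hsin
      exact hsin.const_mul (c j)
    have hlin : HasDerivAt (fun x : ℝ => A + D * x) D 0 := by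
      simpa using (hasDerivAt_id (0:ℝ)).const_mul D
    exact hlin.sub (hsum.const_mul E)
  exact h.deriv

lemma main_aux (M : ℕ) (hM : 2 ≤ M) (b : ℝ) (hb : 0 < b) (v : ℕ → ℝ) :
    ((v M - v 0) / b) - (b / Real.pi) ^ 2 * ∑ j ∈ Finset.Ico 1 M,
      (((j : ℝ) ^ 2 * ∑ k ∈ Finset.Ico 1 M,
        Real.sin (Real.pi * (j : ℝ) * (k : ℝ) / (M : ℝ)) *
          ((2 * (v 0) * Real.pi ^ 2) / ((M : ℝ) * b ^ 2)
            + (2 * ((v M - v 0) / b) * Real.pi ^ 2 * (k : ℝ)) / (b * (M : ℝ) ^ 2)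
            - (2 * Real.pi ^ 2 / ((M : ℝ) * b ^ 2)) * v k)) / (j : ℝ) ^ 2)
        * ((j : ℝ) * Real.pi / b)
    = v 0 * ((Real.pi / (b * (M : ℝ))) * ∑ i ∈ Finset.Ico 1 M,
              (-1 : ℝ) ^ (i + 1) * (i : ℝ) * Real.cot ((i : ℝ) * Real.pi / (2 * (M : ℝ)))
            - (Real.pi / b) * ∑ j ∈ Finset.Ico 1 M,
              (-1 : ℝ) ^ (j + 1) * Real.cot ((j : ℝ) * Real.pi / (2 * (M : ℝ)))
            - 1 / b)
      + v M * (1 / b - (Real.pi / (b * (M : ℝ))) * ∑ i ∈ Finset.Ico 1 M,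
              (-1 : ℝ) ^ (i + 1) * (i : ℝ) * Real.cot ((i : ℝ) * Real.pi / (2 * (M : ℝ))))
      + (Real.pi / b) * ∑ i ∈ Finset.Ico 1 M,
          (-1 : ℝ) ^ (i + 1) * v i * Real.cot ((i : ℝ) * Real.pi / (2 * (M : ℝ))) := by
  have hM0 : 0 < M := by omega
  have hMR : (0:ℝ) < (M:ℝ) := by exact_mod_cast hM0
  have hMne : (M:ℝ) ≠ 0 := ne_of_gt hMR
  have hbne : b ≠ 0 := ne_of_gt hb
  have hπ : (0:ℝ) < Real.pi := Real.pi_pos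
  have hπne : Real.pi ≠ 0 := ne_of_gt hπ
  set c : ℕ → ℝ := fun k => (2 * (v 0) * Real.pi ^ 2) / ((M : ℝ) * b ^ 2)
      + (2 * ((v M - v 0) / b) * Real.pi ^ 2 * (k : ℝ)) / (b * (M : ℝ) ^ 2)
      - (2 * Real.pi ^ 2 / ((M : ℝ) * b ^ 2)) * v k with hc
  have key : (b / Real.pi) ^ 2 * ∑ j ∈ Finset.Ico 1 M,
      (((j : ℝ) ^ 2 * ∑ k ∈ Finset.Ico 1 M,
        Real.sin (Real.pi * (j : ℝ) * (k : ℝ) / (M : ℝ)) * c k) / (j : ℝ) ^ 2)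
        * ((j : ℝ) * Real.pi / b)
      = ∑ k ∈ Finset.Ico 1 M,
          ((M:ℝ)/2) * (-1:ℝ)^(k+1) * Real.cot ((k:ℝ) * Real.pi / (2*(M:ℝ)))
            * ((b / Real.pi) * c k) := by
    rw [Finset.mul_sum]
    have step1 : ∀ j ∈ Finset.Ico 1 M,
        (b / Real.pi) ^ 2 * ((((j : ℝ) ^ 2 * ∑ k ∈ Finset.Ico 1 M,
          Real.sin (Real.pi * (j : ℝ) * (k : ℝ) / (M : ℝ)) * c k) / (j : ℝ) ^ 2)
          * ((j : ℝ) * Real.pi / b))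
        = ∑ k ∈ Finset.Ico 1 M,
            ((j:ℝ) * Real.sin ((j:ℝ) * ((k:ℝ) * Real.pi / (M:ℝ))))
              * ((b / Real.pi) * c k) := by
      intro j hj
      have hj1 : 1 ≤ j := (Finset.mem_Ico.mp hj).1
      have hj0 : ((j:ℝ)) ≠ 0 := by
        have : 0 < j := hj1
        positivity
      rw [mul_div_cancel_left₀ _ (pow_ne_zero 2 hj0)]
      rw [Finset.sum_mul, Finset.mul_sum]
      refine Finset.sum_congr rfl fun k hk => ?_
      rw [show Real.pi * (j : ℝ) * (k : ℝ) / (M : ℝ)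
          = (j:ℝ) * ((k:ℝ) * Real.pi / (M:ℝ)) by ring]
      field_simp
    rw [Finset.sum_congr rfl step1, Finset.sum_comm]
    refine Finset.sum_congr rfl fun k hk => ?_
    rw [← Finset.sum_mul, key_cot M k (Finset.mem_Ico.mp hk).1 (Finset.mem_Ico.mp hk).2]
  rw [key]
  have hterm : ∀ k ∈ Finset.Ico 1 M,
      ((M:ℝ)/2) * (-1:ℝ)^(k+1) * Real.cot ((k:ℝ) * Real.pi / (2*(M:ℝ)))
        * ((b / Real.pi) * c k)
      = (v 0 * Real.pi / b) * ((-1:ℝ)^(k+1) * Real.cot ((k:ℝ) * Real.pi / (2*(M:ℝ))))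
        + ((v M - v 0) * Real.pi / (b * (M:ℝ))) * ((-1:ℝ)^(k+1) * (k:ℝ)
            * Real.cot ((k:ℝ) * Real.pi / (2*(M:ℝ))))
        - (Real.pi / b) * ((-1:ℝ)^(k+1) * v k
            * Real.cot ((k:ℝ) * Real.pi / (2*(M:ℝ)))) := by
    intro k hk
    rw [hc]
    field_simp
  rw [Finset.sum_congr rfl hterm]
  rw [Finset.sum_sub_distrib, Finset.sum_add_distrib, ← Finset.mul_sum, ← Finset.mul_sum,
    ← Finset.mul_sum]
  generalize (∑ i ∈ Finset.Ico 1 M,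
      (-1:ℝ) ^ (i + 1) * Real.cot ((i:ℝ) * Real.pi / (2 * (M:ℝ)))) = S1
  generalize (∑ i ∈ Finset.Ico 1 M,
      (-1:ℝ) ^ (i + 1) * (i:ℝ) * Real.cot ((i:ℝ) * Real.pi / (2 * (M:ℝ)))) = S2
  generalize (∑ i ∈ Finset.Ico 1 M,
      (-1:ℝ) ^ (i + 1) * v i * Real.cot ((i:ℝ) * Real.pi / (2 * (M:ℝ)))) = S3
  field_simp
  ring



/-- Closed form for `ṽ'(0)` (with `N = 2M`) in terms of the grid
values `v₀, …, v_M` and cotangents. -/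
theorem stmt_9 (M : ℕ) (hM : 2 ≤ M) (b : ℝ) (hb : 0 < b) (v : ℕ → ℝ) :
    let a₁ : ℝ := v 0
    let a₀ : ℝ := (v M - v 0) / b
    let B : ℕ → ℝ := fun j => (j : ℝ) ^ 2 * ∑ k ∈ Finset.Ico 1 M,
      Real.sin (Real.pi * (j : ℝ) * (k : ℝ) / (M : ℝ)) *
        ((2 * a₁ * Real.pi ^ 2) / ((M : ℝ) * b ^ 2)
          + (2 * a₀ * Real.pi ^ 2 * (k : ℝ)) / (b * (M : ℝ) ^ 2)
          - (2 * Real.pi ^ 2 / ((M : ℝ) * b ^ 2)) * v k)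
    let vt : ℝ → ℝ := fun x =>
      a₁ + a₀ * x - (b / Real.pi) ^ 2 *
        ∑ j ∈ Finset.Ico 1 M, (B j / (j : ℝ) ^ 2) * Real.sin ((j : ℝ) * Real.pi * x / b)
    deriv vt 0 =
      v 0 * ((Real.pi / (b * (M : ℝ))) * ∑ i ∈ Finset.Ico 1 M,
              (-1 : ℝ) ^ (i + 1) * (i : ℝ) * Real.cot ((i : ℝ) * Real.pi / (2 * (M : ℝ)))
            - (Real.pi / b) * ∑ j ∈ Finset.Ico 1 M,
              (-1 : ℝ) ^ (j + 1) * Real.cot ((j : ℝ) * Real.pi / (2 * (M : ℝ)))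
            - 1 / b)
      + v M * (1 / b - (Real.pi / (b * (M : ℝ))) * ∑ i ∈ Finset.Ico 1 M,
              (-1 : ℝ) ^ (i + 1) * (i : ℝ) * Real.cot ((i : ℝ) * Real.pi / (2 * (M : ℝ))))
      + (Real.pi / b) * ∑ i ∈ Finset.Ico 1 M,
          (-1 : ℝ) ^ (i + 1) * v i * Real.cot ((i : ℝ) * Real.pi / (2 * (M : ℝ))) := by
  intro a₁ a₀ B vt
  have hd := deriv_lin_sin M b hb a₁ a₀ ((b / Real.pi) ^ 2) (fun j => B j / (j : ℝ) ^ 2)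
  calc deriv vt 0
      = a₀ - (b / Real.pi) ^ 2 * ∑ j ∈ Finset.Ico 1 M,
          (B j / (j : ℝ) ^ 2) * ((j : ℝ) * Real.pi / b) := hd
    _ = _ := main_aux M hM b hb v
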